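/- Let k ≥ 3 and n ≥ 1, let φ: [k]^n → ℤ be defined by φ(a) = ∑_{ν=1}^n T^{2^ν}·a(ν) for a sufficiently large integer T (depending on k and n). If a_1, ..., a_k ∈ [k]^n are distinct and φ(a_1), ..., φ(a_k) is an arithmetic progression of length k, then {a_1, ..., a_k} is a quasiline in [k]^n. -/
import Mathlib


/-- `L` is a combinatorial line in the Hales-Jewett cube `[k]^n`. -/
def IsLine (k n : ℕ) (L : Finset (Fin n → Fin k)) : Prop :=
  ∃ η : Fin k → Fin n → Fin k,
    (∃ M : Finset (Fin n), M.Nonempty ∧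
      (∀ i : Fin k, ∀ j ∈ M, η i j = i) ∧
      (∀ i i' : Fin k, ∀ j : Fin n, j ∉ M → η i j = η i' j)) ∧
    L = Finset.image η Finset.univ

/-- `L` is a quasiline in `[k]^n`: a `k`-element set whose entries in every coordinate
are either all identical or mutually distinct. -/
def IsQuasiline (k n : ℕ) (L : Finset (Fin n → Fin k)) : Prop :=
  L.card = k ∧ ∀ ν : Fin n,
    (∀ x ∈ L, ∀ y ∈ L, x ν = y ν) ∨
    (∀ x ∈ L, ∀ y ∈ L, x ≠ y → x ν ≠ y ν)

/-- Digit uniqueness: if a combination of the powers `T^(2^(ν+1))` with coefficients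
bounded by `B < T` vanishes, then all coefficients vanish. -/
lemma digit_zero {T n : ℕ} {B : ℤ} (c : Fin n → ℤ)
    (hB : 0 ≤ B) (hT : B < (T : ℤ))
    (hc : ∀ ν, |c ν| ≤ B)
    (hsum : ∑ ν : Fin n, (T : ℤ) ^ (2 ^ ((ν : ℕ) + 1)) * c ν = 0) :
    ∀ ν, c ν = 0 := by
  have hT1 : 1 ≤ (T : ℤ) := by
    have : (0 : ℤ) < T := lt_of_le_of_lt hB hT
    omega
  suffices H : ∀ m, ∀ ν : Fin n, (ν : ℕ) < m → c ν = 0 by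
    intro ν; exact H ((ν : ℕ) + 1) ν (Nat.lt_succ_self _)
  intro m
  induction m with
  | zero => intro ν h; exact absurd h (Nat.not_lt_zero _)
  | succ m ih =>
    intro ν hν
    rcases Nat.lt_succ_iff_lt_or_eq.mp hν with h | h
    · exact ih ν h
    -- ν.val = m
    have hsplit : ∑ μ : Fin n, (T : ℤ) ^ (2 ^ ((μ : ℕ) + 1)) * c μ
        = (∑ μ ∈ Finset.univ.filter (fun μ : Fin n => m < (μ : ℕ)),
            (T : ℤ) ^ (2 ^ ((μ : ℕ) + 1)) * c μ)
          + (T : ℤ) ^ (2 ^ (m + 1)) * c ν := by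
      rw [← Finset.sum_filter_add_sum_filter_not Finset.univ (fun μ : Fin n => m < (μ : ℕ))]
      congr 1
      have : ∑ μ ∈ Finset.univ.filter (fun μ : Fin n => ¬ m < (μ : ℕ)),
          (T : ℤ) ^ (2 ^ ((μ : ℕ) + 1)) * c μ
          = (T : ℤ) ^ (2 ^ ((ν : ℕ) + 1)) * c ν := by
        apply Finset.sum_eq_single_of_mem
        · simp [h]
        · intro μ hμ hne
          simp only [Finset.mem_filter, Finset.mem_univ, true_and, not_lt] at hμ
          have hμm : (μ : ℕ) < m := by
            rcases Nat.lt_or_ge (μ : ℕ) m with h' | h'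
            · exact h'
            · exfalso; apply hne; apply Fin.ext; omega
          rw [ih μ hμm, mul_zero]
      rw [this, h]
    have hd2 : (T : ℤ) ^ (2 ^ (m + 2)) ∣
        ∑ μ ∈ Finset.univ.filter (fun μ : Fin n => m < (μ : ℕ)),
          (T : ℤ) ^ (2 ^ ((μ : ℕ) + 1)) * c μ := by
      apply Finset.dvd_sum
      intro μ hμ
      simp only [Finset.mem_filter, Finset.mem_univ, true_and] at hμ
      exact Dvd.dvd.mul_right (pow_dvd_pow _ (Nat.pow_le_pow_right (by norm_num) (by omega))) _
    have hdvd : (T : ℤ) ^ (2 ^ (m + 2)) ∣ (T : ℤ) ^ (2 ^ (m + 1)) * c ν := by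
      have : (T : ℤ) ^ (2 ^ (m + 1)) * c ν
          = - ∑ μ ∈ Finset.univ.filter (fun μ : Fin n => m < (μ : ℕ)),
              (T : ℤ) ^ (2 ^ ((μ : ℕ) + 1)) * c μ := by
        have := hsum; rw [hsplit] at this; linarith
      rw [this]
      exact Dvd.dvd.neg_right hd2
    have hexp : 2 ^ (m + 2) = 2 ^ (m + 1) + 2 ^ (m + 1) := by
      rw [pow_succ]; ring
    have hTe : (T : ℤ) ^ (2 ^ (m + 1)) ≠ 0 := pow_ne_zero _ (by linarith)
    have hdvd2 : (T : ℤ) ^ (2 ^ (m + 1)) ∣ c ν := by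
      rw [hexp, pow_add] at hdvd
      exact (mul_dvd_mul_iff_left hTe).mp hdvd
    have hlt : |c ν| < (T : ℤ) ^ (2 ^ (m + 1)) :=
      lt_of_le_of_lt (hc ν)
        (lt_of_lt_of_le hT (le_self_pow₀ hT1 (by positivity)))
    exact Int.eq_zero_of_abs_lt_dvd hdvd2 hlt

theorem ap_of_images_is_quasiline (k n : ℕ) (hk : 3 ≤ k) (hn : 1 ≤ n) :
    ∃ T₀ : ℕ, ∀ T : ℕ, T₀ ≤ T →
      ∀ a : Fin k → Fin n → Fin k, Function.Injective a →
        (∃ d : ℤ, ∀ i : ℕ, ∀ h : i + 1 < k,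
          (∑ ν : Fin n, (T : ℤ) ^ (2 ^ ((ν : ℕ) + 1)) * (((a ⟨i + 1, h⟩ ν : ℕ) : ℤ) + 1)) -
          (∑ ν : Fin n, (T : ℤ) ^ (2 ^ ((ν : ℕ) + 1)) *
            (((a ⟨i, Nat.lt_of_succ_lt h⟩ ν : ℕ) : ℤ) + 1)) = d) →
        IsQuasiline k n (Finset.image a Finset.univ) := by
  refine ⟨2 * k, fun T hT a ha hap => ?_⟩
  obtain ⟨d, hd⟩ := hap
  have hTk : (2 * k : ℤ) ≤ (T : ℤ) := by exact_mod_cast hT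
  -- step 1: the coordinatewise differences are independent of the step
  have key : ∀ i j : ℕ, ∀ hi : i + 1 < k, ∀ hj : j + 1 < k, ∀ ν : Fin n,
      ((a ⟨i + 1, hi⟩ ν : ℕ) : ℤ) - ((a ⟨i, Nat.lt_of_succ_lt hi⟩ ν : ℕ) : ℤ)
        = ((a ⟨j + 1, hj⟩ ν : ℕ) : ℤ) - ((a ⟨j, Nat.lt_of_succ_lt hj⟩ ν : ℕ) : ℤ) := by
    intro i j hi hj
    set c : Fin n → ℤ := fun ν =>
      (((a ⟨i + 1, hi⟩ ν : ℕ) : ℤ) - ((a ⟨i, Nat.lt_of_succ_lt hi⟩ ν : ℕ) : ℤ))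
      - (((a ⟨j + 1, hj⟩ ν : ℕ) : ℤ) - ((a ⟨j, Nat.lt_of_succ_lt hj⟩ ν : ℕ) : ℤ)) with hc_def
    have hsum : ∑ ν : Fin n, (T : ℤ) ^ (2 ^ ((ν : ℕ) + 1)) * c ν = 0 := by
      have h1 := hd i hi
      have h2 := hd j hj
      have hrw : ∀ ν : Fin n, (T : ℤ) ^ (2 ^ ((ν : ℕ) + 1)) * c ν
          = ((T : ℤ) ^ (2 ^ ((ν : ℕ) + 1)) * (((a ⟨i + 1, hi⟩ ν : ℕ) : ℤ) + 1)
              - (T : ℤ) ^ (2 ^ ((ν : ℕ) + 1)) * (((a ⟨i, Nat.lt_of_succ_lt hi⟩ ν : ℕ) : ℤ) + 1))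
            - ((T : ℤ) ^ (2 ^ ((ν : ℕ) + 1)) * (((a ⟨j + 1, hj⟩ ν : ℕ) : ℤ) + 1)
              - (T : ℤ) ^ (2 ^ ((ν : ℕ) + 1)) * (((a ⟨j, Nat.lt_of_succ_lt hj⟩ ν : ℕ) : ℤ) + 1)) := by
        intro ν; rw [hc_def]; ring
      rw [Finset.sum_congr rfl (fun ν _ => hrw ν)]
      rw [Finset.sum_sub_distrib, Finset.sum_sub_distrib, Finset.sum_sub_distrib, h1, h2]
      ring
    have hzero := digit_zero c (B := 2 * k - 2) (by omega) (by omega)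
      (fun ν => by
        have e1 := (a ⟨i + 1, hi⟩ ν).isLt
        have e2 := (a ⟨i, Nat.lt_of_succ_lt hi⟩ ν).isLt
        have e3 := (a ⟨j + 1, hj⟩ ν).isLt
        have e4 := (a ⟨j, Nat.lt_of_succ_lt hj⟩ ν).isLt
        rw [hc_def, abs_le]
        constructor <;> [skip; skip] <;> push_cast <;> omega) hsum
    intro ν
    have := hzero ν
    rw [hc_def] at this
    simp only at this
    linarith
  have h01 : (1 : ℕ) < k := by omega
  set δ : Fin n → ℤ := fun ν =>
    ((a ⟨1, h01⟩ ν : ℕ) : ℤ) - ((a ⟨0, by omega⟩ ν : ℕ) : ℤ) with hδ_def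
  have step : ∀ i : ℕ, ∀ hi : i + 1 < k, ∀ ν : Fin n,
      ((a ⟨i + 1, hi⟩ ν : ℕ) : ℤ) = ((a ⟨i, Nat.lt_of_succ_lt hi⟩ ν : ℕ) : ℤ) + δ ν := by
    intro i hi ν
    have := key i 0 hi (by omega) ν
    rw [hδ_def]
    simp only
    linarith
  -- step 2: linear formula for each coordinate
  have lin : ∀ i : ℕ, ∀ hi : i < k, ∀ ν : Fin n,
      ((a ⟨i, hi⟩ ν : ℕ) : ℤ) = ((a ⟨0, by omega⟩ ν : ℕ) : ℤ) + (i : ℤ) * δ ν := by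
    intro i
    induction i with
    | zero => intro hi ν; simp
    | succ m ih =>
      intro hi ν
      have hm : m < k := by omega
      have h1 := step m hi ν
      have h2 := ih hm ν
      push_cast
      rw [h1, h2]
      ring
  -- conclusion
  constructor
  · rw [Finset.card_image_of_injective _ ha, Finset.card_univ, Fintype.card_fin]
  · intro ν
    by_cases hδ : δ ν = 0
    · left
      intro x hx y hy
      obtain ⟨i, -, rfl⟩ := Finset.mem_image.mp hx
      obtain ⟨j, -, rfl⟩ := Finset.mem_image.mp hy
      have hi := lin i.val i.isLt ν
      have hj := lin j.val j.isLt ν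
      rw [hδ, mul_zero, add_zero] at hi hj
      simp only [Fin.eta] at hi hj
      have : ((a i ν : ℕ) : ℤ) = ((a j ν : ℕ) : ℤ) := by rw [hi, hj]
      exact Fin.ext (by exact_mod_cast this)
    · right
      intro x hx y hy hxy
      obtain ⟨i, -, rfl⟩ := Finset.mem_image.mp hx
      obtain ⟨j, -, rfl⟩ := Finset.mem_image.mp hy
      have hij : i ≠ j := fun h => hxy (by rw [h])
      intro heq
      have hi := lin i.val i.isLt ν
      have hj := lin j.val j.isLt ν
      simp only [Fin.eta] at hi hj
      have hcast : ((a i ν : ℕ) : ℤ) = ((a j ν : ℕ) : ℤ) := by rw [heq]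
      rw [hi, hj] at hcast
      have : (i.val : ℤ) = (j.val : ℤ) := by
        have h2 : (i.val : ℤ) * δ ν = (j.val : ℤ) * δ ν := by linarith
        exact mul_right_cancel₀ hδ h2
      exact hij (Fin.ext (by exact_mod_cast this))
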